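/- (Simplified Davis–Kahan theorem.) Let A, A' be N×N Hermitian complex matrices with eigenvalues λ_0 ≤ λ_1 ≤ … ≤ λ_{N−1} and λ'_0 ≤ λ'_1 ≤ … ≤ λ'_{N−1}, and let v_0,…,v_{N−1} and v'_0,…,v'_{N−1} be unit eigenvectors with A v_j = λ_j v_j and A' v'_j = λ'_j v'_j. Fix j ∈ {0,…,N−1} and set δ_j := min{|λ_j − λ'_{j−1}|, |λ_j − λ'_{j+1}|}, where the term |λ_j − λ'_{j−1}| is omitted when j = 0 and the term |λ_j − λ'_{j+1}| is omitted when j = N−1. If δ_j > 0, then √(1 − |⟨v_j, v'_j⟩|²) ≤ (π/2)·‖A − A'‖/δ_j. -/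

import Mathlib

open Matrix

/-- The spectral norm (largest singular value) of a complex matrix, i.e. the operator norm
induced by the Euclidean norm. -/
noncomputable def specNorm {N : ℕ} (M : Matrix (Fin N) (Fin N) ℂ) : ℝ :=
  ‖Matrix.toEuclideanCLM (𝕜 := ℂ) M‖

open scoped InnerProductSpace ComplexConjugate

section aux
variable {N : ℕ}

lemma dk_norm_mulVec_le (M : Matrix (Fin N) (Fin N) ℂ) (x : Fin N → ℂ) :
    ‖(WithLp.equiv 2 (Fin N → ℂ)).symm (M.mulVec x)‖ ≤
      specNorm M * ‖(WithLp.equiv 2 (Fin N → ℂ)).symm x‖ := by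
  have h := (Matrix.toEuclideanCLM (𝕜 := ℂ) M).le_opNorm ((WithLp.equiv 2 (Fin N → ℂ)).symm x)
  rw [WithLp.equiv_symm_apply, Matrix.toEuclideanCLM_toLp] at h
  exact h

lemma dk_eig_dot {A : Matrix (Fin N) (Fin N) ℂ} (hA : A.IsHermitian)
    {lam : ℝ} {u : Fin N → ℂ} (hu : A.mulVec u = (lam : ℂ) • u) (x : Fin N → ℂ) :
    star u ⬝ᵥ A.mulVec x = (lam : ℂ) * (star u ⬝ᵥ x) := by
  have h1 : star u ᵥ* A = (lam : ℂ) • star u := by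
    have h := congrArg star hu
    rw [Matrix.star_mulVec, hA.eq] at h
    rw [h, star_smul]
    simp [Complex.star_def]
  rw [Matrix.dotProduct_mulVec, h1, smul_dotProduct, smul_eq_mul]

lemma dk_orthonormal {v : Fin N → (Fin N → ℂ)}
    (hv : ∀ j k, star (v j) ⬝ᵥ v k = if j = k then 1 else 0) :
    Orthonormal ℂ (fun k => (WithLp.equiv 2 (Fin N → ℂ)).symm (v k)) := by
  rw [orthonormal_iff_ite]; intro i j
  rw [WithLp.equiv_symm_apply, EuclideanSpace.inner_toLp_toLp, dotProduct_comm, hv i j]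

noncomputable def dk_basis (v : Fin N → (Fin N → ℂ)) (hN : 0 < N)
    (hv : ∀ j k, star (v j) ⬝ᵥ v k = if j = k then 1 else 0) :
    OrthonormalBasis (Fin N) ℂ (EuclideanSpace ℂ (Fin N)) :=
  haveI : Nonempty (Fin N) := ⟨⟨0, hN⟩⟩
  (basisOfOrthonormalOfCardEqFinrank (dk_orthonormal hv) (by simp)).toOrthonormalBasis
    (by rw [coe_basisOfOrthonormalOfCardEqFinrank]; exact dk_orthonormal hv)

lemma dk_basis_apply (v : Fin N → (Fin N → ℂ)) (hN : 0 < N)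
    (hv : ∀ j k, star (v j) ⬝ᵥ v k = if j = k then 1 else 0) (k : Fin N) :
    dk_basis v hN hv k = (WithLp.equiv 2 (Fin N → ℂ)).symm (v k) := by
  haveI : Nonempty (Fin N) := ⟨⟨0, hN⟩⟩
  have : ⇑(dk_basis v hN hv) = fun k => (WithLp.equiv 2 (Fin N → ℂ)).symm (v k) := by
    rw [dk_basis, Module.Basis.coe_toOrthonormalBasis, coe_basisOfOrthonormalOfCardEqFinrank]
  rw [this]

lemma dk_repr (v : Fin N → (Fin N → ℂ)) (hN : 0 < N)
    (hv : ∀ j k, star (v j) ⬝ᵥ v k = if j = k then 1 else 0)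
    (y : EuclideanSpace ℂ (Fin N)) (k : Fin N) :
    (dk_basis v hN hv).repr y k = star (v k) ⬝ᵥ (WithLp.equiv 2 (Fin N → ℂ)) y := by
  rw [OrthonormalBasis.repr_apply_apply, dk_basis_apply]
  rw [EuclideanSpace.inner_eq_star_dotProduct]
  simp
  exact dotProduct_comm _ _

lemma dk_parseval (b : OrthonormalBasis (Fin N) ℂ (EuclideanSpace ℂ (Fin N)))
    (y : EuclideanSpace ℂ (Fin N)) :
    ∑ k, ‖b.repr y k‖ ^ 2 = ‖y‖ ^ 2 := by
  have h : ‖b.repr y‖ = ‖y‖ := b.repr.norm_map y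
  rw [← h, EuclideanSpace.norm_eq, Real.sq_sqrt (by positivity)]

lemma dk_quad {A : Matrix (Fin N) (Fin N) ℂ} (hA : A.IsHermitian)
    {lam : Fin N → ℝ} {v : Fin N → (Fin N → ℂ)} (hN : 0 < N)
    (hv : ∀ j k, star (v j) ⬝ᵥ v k = if j = k then 1 else 0)
    (heig : ∀ j, A.mulVec (v j) = (lam j : ℂ) • v j)
    (y : EuclideanSpace ℂ (Fin N)) :
    (⟪y, (Matrix.toEuclideanCLM (𝕜 := ℂ) A) y⟫_ℂ).re
      = ∑ k, lam k * ‖(dk_basis v hN hv).repr y k‖ ^ 2 := by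
  have key : ∀ k, ⟪dk_basis v hN hv k, (Matrix.toEuclideanCLM (𝕜 := ℂ) A) y⟫_ℂ
      = (lam k : ℂ) * (dk_basis v hN hv).repr y k := by
    intro k
    rw [← OrthonormalBasis.repr_apply_apply, dk_repr, dk_repr]
    exact dk_eig_dot hA (heig k) ((WithLp.equiv 2 (Fin N → ℂ)) y)
  have expand : ⟪y, (Matrix.toEuclideanCLM (𝕜 := ℂ) A) y⟫_ℂ
      = ∑ k, ⟪y, dk_basis v hN hv k⟫_ℂ
          * ⟪dk_basis v hN hv k, (Matrix.toEuclideanCLM (𝕜 := ℂ) A) y⟫_ℂ :=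
    ((dk_basis v hN hv).sum_inner_mul_inner y _).symm
  rw [expand, Complex.re_sum]
  refine Finset.sum_congr rfl fun k _ => ?_
  rw [key k]
  have h1 : ⟪y, dk_basis v hN hv k⟫_ℂ = conj ((dk_basis v hN hv).repr y k) := by
    rw [← inner_conj_symm, OrthonormalBasis.repr_apply_apply]
  rw [h1, mul_left_comm, RCLike.conj_mul]
  norm_cast
  simp [Complex.mul_re]
  left
  norm_cast


lemma dk_span_inner_zero {w : EuclideanSpace ℂ (Fin N)} {S : Set (EuclideanSpace ℂ (Fin N))}
    (hS : ∀ z ∈ S, ⟪w, z⟫_ℂ = 0) {x : EuclideanSpace ℂ (Fin N)}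
    (hx : x ∈ Submodule.span ℂ S) : ⟪w, x⟫_ℂ = 0 := by
  have hle : Submodule.span ℂ S ≤ LinearMap.ker (innerSL ℂ w : EuclideanSpace ℂ (Fin N) →ₗ[ℂ] ℂ) :=
    Submodule.span_le.mpr fun z hz => LinearMap.mem_ker.mpr (hS z hz)
  exact LinearMap.mem_ker.mp (hle hx)

lemma dk_weyl (A A' : Matrix (Fin N) (Fin N) ℂ)
    (hA : A.IsHermitian) (hA' : A'.IsHermitian)
    (lam lam' : Fin N → ℝ) (hmono : Monotone lam) (hmono' : Monotone lam')
    (v v' : Fin N → (Fin N → ℂ))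
    (hv : ∀ j k, star (v j) ⬝ᵥ v k = if j = k then 1 else 0)
    (hv' : ∀ j k, star (v' j) ⬝ᵥ v' k = if j = k then 1 else 0)
    (heig : ∀ j, A.mulVec (v j) = (lam j : ℂ) • v j)
    (heig' : ∀ j, A'.mulVec (v' j) = (lam' j : ℂ) • v' j)
    (i : Fin N) : lam' i ≤ lam i + specNorm (A' - A) := by
  classical
  have hN : 0 < N := i.pos
  set b := dk_basis v hN hv with hb
  set b' := dk_basis v' hN hv' with hb'
  let w : Fin N → EuclideanSpace ℂ (Fin N) := fun k => (WithLp.equiv 2 (Fin N → ℂ)).symm (v k)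
  let w' : Fin N → EuclideanSpace ℂ (Fin N) := fun k => (WithLp.equiv 2 (Fin N → ℂ)).symm (v' k)
  let ι : Fin (i.1 + 1) → Fin N := fun m => ⟨m.1, lt_of_lt_of_le m.2 i.2⟩
  let ι' : Fin (N - i.1) → Fin N := fun m => ⟨i.1 + m.1, by have := m.2; omega⟩
  have hι : Function.Injective ι := by
    intro a b hab
    have h : (ι a).1 = (ι b).1 := congrArg Fin.val hab
    exact Fin.ext h
  have hι' : Function.Injective ι' := by
    intro a b hab
    have h : (ι' a).1 = (ι' b).1 := congrArg Fin.val hab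
    have h2 : i.1 + a.1 = i.1 + b.1 := h
    exact Fin.ext (by omega)
  have hfli : LinearIndependent ℂ (w ∘ ι) := ((dk_orthonormal hv).comp ι hι).linearIndependent
  have hgli : LinearIndependent ℂ (w' ∘ ι') := ((dk_orthonormal hv').comp ι' hι').linearIndependent
  set U := Submodule.span ℂ (Set.range (w ∘ ι)) with hU
  set V := Submodule.span ℂ (Set.range (w' ∘ ι')) with hV
  have hUr : Module.finrank ℂ U = i.1 + 1 := by
    rw [hU, finrank_span_eq_card hfli]; simp
  have hVr : Module.finrank ℂ V = N - i.1 := by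
    rw [hV, finrank_span_eq_card hgli]; simp
  -- intersection is nontrivial
  have hne : U ⊓ V ≠ ⊥ := by
    intro hbot
    have hsum := Submodule.finrank_sup_add_finrank_inf_eq U V
    rw [hbot, finrank_bot, add_zero, hUr, hVr] at hsum
    have hle : Module.finrank ℂ ↥(U ⊔ V) ≤ N := by
      have := Submodule.finrank_le (U ⊔ V)
      simpa using this
    omega
  obtain ⟨x0, hx0mem, hx0ne⟩ := Submodule.ne_bot_iff _ |>.mp hne
  set x : EuclideanSpace ℂ (Fin N) := ‖x0‖⁻¹ • x0 with hxdef
  have hxnorm : ‖x‖ = 1 := norm_smul_inv_norm hx0ne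
  have hxmem : x ∈ U ⊓ V := Submodule.smul_of_tower_mem _ _ hx0mem
  have hxU : x ∈ U := hxmem.1
  have hxV : x ∈ V := hxmem.2
  -- coefficients
  have hcU : ∀ k : Fin N, i < k → b.repr x k = 0 := by
    intro k hk
    rw [OrthonormalBasis.repr_apply_apply, hb, dk_basis_apply]
    refine dk_span_inner_zero (fun z hz => ?_) hxU
    obtain ⟨m, rfl⟩ := hz
    show ⟪(WithLp.equiv 2 (Fin N → ℂ)).symm (v k), (WithLp.equiv 2 (Fin N → ℂ)).symm (v (ι m))⟫_ℂ = 0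
    rw [WithLp.equiv_symm_apply, EuclideanSpace.inner_toLp_toLp, dotProduct_comm, hv]
    have : k ≠ ι m := by
      intro h
      have : k.1 = m.1 := congrArg Fin.val h
      have hm : m.1 ≤ i.1 := by have := m.2; omega
      have hki : i.1 < k.1 := hk
      omega
    simp [this]
  have hcV : ∀ k : Fin N, k < i → b'.repr x k = 0 := by
    intro k hk
    rw [OrthonormalBasis.repr_apply_apply, hb', dk_basis_apply]
    refine dk_span_inner_zero (fun z hz => ?_) hxV
    obtain ⟨m, rfl⟩ := hz
    show ⟪(WithLp.equiv 2 (Fin N → ℂ)).symm (v' k), (WithLp.equiv 2 (Fin N → ℂ)).symm (v' (ι' m))⟫_ℂ = 0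
    rw [WithLp.equiv_symm_apply, EuclideanSpace.inner_toLp_toLp, dotProduct_comm, hv']
    have : k ≠ ι' m := by
      intro h
      have : k.1 = i.1 + m.1 := congrArg Fin.val h
      have hki : k.1 < i.1 := hk
      omega
    simp [this]
  -- quadratic form bounds
  have hq1 : (⟪x, (Matrix.toEuclideanCLM (𝕜 := ℂ) A) x⟫_ℂ).re ≤ lam i := by
    rw [dk_quad hA hN hv heig x]
    have hsum : ∑ k, lam k * ‖b.repr x k‖ ^ 2 ≤ ∑ k, lam i * ‖b.repr x k‖ ^ 2 := by
      refine Finset.sum_le_sum fun k _ => ?_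
      rcases le_or_gt k i with hk | hk
      · exact mul_le_mul_of_nonneg_right (hmono hk) (sq_nonneg _)
      · rw [hcU k hk]; simp
    calc ∑ k, lam k * ‖b.repr x k‖ ^ 2 ≤ ∑ k, lam i * ‖b.repr x k‖ ^ 2 := hsum
      _ = lam i * ∑ k, ‖b.repr x k‖ ^ 2 := by rw [Finset.mul_sum]
      _ = lam i := by rw [dk_parseval, hxnorm]; simp
  have hq2 : lam' i ≤ (⟪x, (Matrix.toEuclideanCLM (𝕜 := ℂ) A') x⟫_ℂ).re := by
    rw [dk_quad hA' hN hv' heig' x]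
    have hsum : ∑ k, lam' i * ‖b'.repr x k‖ ^ 2 ≤ ∑ k, lam' k * ‖b'.repr x k‖ ^ 2 := by
      refine Finset.sum_le_sum fun k _ => ?_
      rcases le_or_gt k i with hk | hk
      · rcases eq_or_lt_of_le hk with hk' | hk'
        · rw [hk']
        · rw [hcV k hk']; simp
      · exact mul_le_mul_of_nonneg_right (hmono' hk.le) (sq_nonneg _)
    calc lam' i = lam' i * ∑ k, ‖b'.repr x k‖ ^ 2 := by rw [dk_parseval, hxnorm]; simp
      _ = ∑ k, lam' i * ‖b'.repr x k‖ ^ 2 := by rw [Finset.mul_sum]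
      _ ≤ ∑ k, lam' k * ‖b'.repr x k‖ ^ 2 := hsum
  -- perturbation bound
  have hdiff : (⟪x, (Matrix.toEuclideanCLM (𝕜 := ℂ) A') x⟫_ℂ).re
      - (⟪x, (Matrix.toEuclideanCLM (𝕜 := ℂ) A) x⟫_ℂ).re ≤ specNorm (A' - A) := by
    have h1 : ⟪x, (Matrix.toEuclideanCLM (𝕜 := ℂ) A') x⟫_ℂ
        - ⟪x, (Matrix.toEuclideanCLM (𝕜 := ℂ) A) x⟫_ℂ
        = ⟪x, (Matrix.toEuclideanCLM (𝕜 := ℂ) (A' - A)) x⟫_ℂ := by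
      rw [map_sub, ContinuousLinearMap.sub_apply, inner_sub_right]
    have h2 : ((⟪x, (Matrix.toEuclideanCLM (𝕜 := ℂ) (A' - A)) x⟫_ℂ)).re
        ≤ specNorm (A' - A) := by
      refine le_trans (Complex.re_le_norm _) ?_
      refine le_trans (norm_inner_le_norm _ _) ?_
      rw [hxnorm, one_mul]
      have := (Matrix.toEuclideanCLM (𝕜 := ℂ) (A' - A)).le_opNorm x
      rw [hxnorm, mul_one] at this
      exact this
    calc (⟪x, (Matrix.toEuclideanCLM (𝕜 := ℂ) A') x⟫_ℂ).re
          - (⟪x, (Matrix.toEuclideanCLM (𝕜 := ℂ) A) x⟫_ℂ).re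
        = (⟪x, (Matrix.toEuclideanCLM (𝕜 := ℂ) A') x⟫_ℂ
            - ⟪x, (Matrix.toEuclideanCLM (𝕜 := ℂ) A) x⟫_ℂ).re := by rw [Complex.sub_re]
      _ = ((⟪x, (Matrix.toEuclideanCLM (𝕜 := ℂ) (A' - A)) x⟫_ℂ)).re := by rw [h1]
      _ ≤ specNorm (A' - A) := h2
  linarith

end aux

lemma dk_specNorm_neg {N : ℕ} (M : Matrix (Fin N) (Fin N) ℂ) : specNorm (-M) = specNorm M := by
  rw [specNorm, specNorm, map_neg, norm_neg]

/-- **Simplified Davis–Kahan theorem.**  Let `A, A'` be Hermitian `N × N` matrices with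
eigenvalues `lam, lam'` listed in nondecreasing order (with multiplicity, as witnessed by
orthonormal eigenbases `v, v'`).  Fix `j` and let `δj > 0` be a lower bound for
`min {|lam j - lam' (j-1)|, |lam j - lam' (j+1)|}` (each term being omitted at the
respective boundary).  Then `√(1 - |⟨v j, v' j⟩|²) ≤ (π/2) ‖A - A'‖ / δj`. -/
theorem davis_kahan {N : ℕ} (A A' : Matrix (Fin N) (Fin N) ℂ)
    (hA : A.IsHermitian) (hA' : A'.IsHermitian)
    (lam lam' : Fin N → ℝ) (hmono : Monotone lam) (hmono' : Monotone lam')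
    (v v' : Fin N → (Fin N → ℂ))
    (hv : ∀ j k, star (v j) ⬝ᵥ v k = if j = k then 1 else 0)
    (hv' : ∀ j k, star (v' j) ⬝ᵥ v' k = if j = k then 1 else 0)
    (heig : ∀ j, A.mulVec (v j) = (lam j : ℂ) • v j)
    (heig' : ∀ j, A'.mulVec (v' j) = (lam' j : ℂ) • v' j)
    (j : Fin N) (δj : ℝ) (hδpos : 0 < δj)
    (hδ : ∀ i : Fin N, ((i : ℕ) = (j : ℕ) + 1 ∨ (i : ℕ) + 1 = (j : ℕ)) →
      δj ≤ |lam j - lam' i|) :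
    Real.sqrt (1 - ‖star (v j) ⬝ᵥ v' j‖ ^ 2) ≤
      Real.pi / 2 * specNorm (A - A') / δj := by
  classical
  have hN : 0 < N := j.pos
  set En := specNorm (A - A') with hEdef
  have hEnn : (0:ℝ) ≤ En := norm_nonneg _
  have hpi : (1:ℝ) ≤ Real.pi / 2 := Real.one_le_pi_div_two
  set c : Fin N → ℂ := fun k => star (v' k) ⬝ᵥ v j with hc
  have habs : ‖star (v j) ⬝ᵥ v' j‖ = ‖c j‖ := by
    simp only [hc]
    rw [Matrix.star_dotProduct, norm_star]
  rw [habs]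
  have hcnn : (0:ℝ) ≤ ‖c j‖ ^ 2 := sq_nonneg _
  have hLHS1 : Real.sqrt (1 - ‖c j‖ ^ 2) ≤ 1 := by
    have h := Real.sqrt_le_sqrt (show 1 - ‖c j‖ ^ 2 ≤ 1 by nlinarith)
    simpa using h
  rcases le_or_gt δj (Real.pi / 2 * En) with hcase | hcase
  · have h1 : (1:ℝ) ≤ Real.pi / 2 * En / δj := (le_div_iff₀ hδpos).mpr (by linarith)
    calc Real.sqrt (1 - ‖c j‖ ^ 2) ≤ 1 := hLHS1
      _ ≤ Real.pi / 2 * En / δj := h1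
  · have hElt : En < δj := lt_of_le_of_lt (by nlinarith) hcase
    have hgap : ∀ k : Fin N, k ≠ j → δj ≤ |lam' k - lam j| := by
      intro k hk
      rcases lt_or_gt_of_ne hk with hkj | hkj
      · -- k < j
        have hkv : k.1 < j.1 := hkj
        have hj1 : 1 ≤ j.1 := by omega
        set i0 : Fin N := ⟨j.1 - 1, by omega⟩ with hi0
        have hi0v : i0.1 = j.1 - 1 := rfl
        have hδ0 : δj ≤ |lam j - lam' i0| := hδ i0 (Or.inr (by rw [hi0v]; omega))
        have hw : lam' i0 ≤ lam i0 + specNorm (A' - A) :=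
          dk_weyl A A' hA hA' lam lam' hmono hmono' v v' hv hv' heig heig' i0
        have hspec : specNorm (A' - A) = En := by
          rw [show A' - A = -(A - A') from (neg_sub _ _).symm, dk_specNorm_neg, hEdef]
        rw [hspec] at hw
        have h2 : lam i0 ≤ lam j := hmono (by rw [Fin.le_def, hi0v]; omega)
        have h1 : lam' i0 ≤ lam j + En := by linarith
        have h3 : lam' i0 ≤ lam j - δj := by
          rcases le_abs.mp hδ0 with h | h
          · linarith
          · linarith
        have h4 : lam' k ≤ lam' i0 := hmono' (by rw [Fin.le_def, hi0v]; omega)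
        calc δj ≤ lam j - lam' k := by linarith
          _ ≤ |lam' k - lam j| := by rw [abs_sub_comm]; exact le_abs_self _
      · -- j < k
        have hkv : j.1 < k.1 := hkj
        set i1 : Fin N := ⟨j.1 + 1, by have := k.2; omega⟩ with hi1
        have hi1v : i1.1 = j.1 + 1 := rfl
        have hδ1 : δj ≤ |lam j - lam' i1| := hδ i1 (Or.inl hi1v)
        have hw : lam i1 ≤ lam' i1 + specNorm (A - A') :=
          dk_weyl A' A hA' hA lam' lam hmono' hmono v' v hv' hv heig' heig i1
        rw [← hEdef] at hw
        have h2 : lam j ≤ lam i1 := hmono (by rw [Fin.le_def, hi1v]; omega)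
        have h1 : lam j - En ≤ lam' i1 := by linarith
        have h3 : lam j + δj ≤ lam' i1 := by
          rcases le_abs.mp hδ1 with h | h
          · linarith
          · linarith
        have h4 : lam' i1 ≤ lam' k := hmono' (by rw [Fin.le_def, hi1v]; omega)
        calc δj ≤ lam' k - lam j := by linarith
          _ ≤ |lam' k - lam j| := le_abs_self _
    -- main estimate
    set b' := dk_basis v' hN hv' with hb'
    have hvj : ‖(WithLp.equiv 2 (Fin N → ℂ)).symm (v j)‖ = 1 := by
      have hip : ⟪(WithLp.equiv 2 (Fin N → ℂ)).symm (v j),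
          (WithLp.equiv 2 (Fin N → ℂ)).symm (v j)⟫_ℂ = 1 := by
        rw [WithLp.equiv_symm_apply, EuclideanSpace.inner_toLp_toLp, dotProduct_comm, hv j j]; simp
      rw [@norm_eq_sqrt_re_inner ℂ, hip]
      simp
    set y : EuclideanSpace ℂ (Fin N) :=
      (WithLp.equiv 2 (Fin N → ℂ)).symm ((A' - A).mulVec (v j)) with hy
    have hynorm : ‖y‖ ≤ En := by
      have h2 : (A' - A).mulVec (v j) = -((A - A').mulVec (v j)) := by
        rw [← Matrix.neg_mulVec, neg_sub]
      calc ‖y‖ = ‖(WithLp.equiv 2 (Fin N → ℂ)).symm ((A - A').mulVec (v j))‖ := by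
            rw [hy, h2, WithLp.equiv_symm_apply, WithLp.toLp_neg, norm_neg]
        _ ≤ En * ‖(WithLp.equiv 2 (Fin N → ℂ)).symm (v j)‖ := dk_norm_mulVec_le _ _
        _ = En := by rw [hvj, mul_one]
    have hrepr : ∀ k, b'.repr y k = ((lam' k : ℂ) - (lam j : ℂ)) * c k := by
      intro k
      rw [hb', hy, dk_repr, Equiv.apply_symm_apply, Matrix.sub_mulVec, dotProduct_sub,
        dk_eig_dot hA' (heig' k), heig j, dotProduct_smul, smul_eq_mul]
      simp only [hc]
      ring
    have hreprvj : ∀ k, b'.repr ((WithLp.equiv 2 (Fin N → ℂ)).symm (v j)) k = c k := by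
      intro k
      rw [hb', dk_repr, Equiv.apply_symm_apply]
    have hsumc : ∑ k, ‖c k‖ ^ 2 = 1 := by
      calc ∑ k, ‖c k‖ ^ 2
          = ∑ k, ‖b'.repr ((WithLp.equiv 2 (Fin N → ℂ)).symm (v j)) k‖ ^ 2 :=
            Finset.sum_congr rfl fun k _ => by rw [hreprvj k]
        _ = ‖(WithLp.equiv 2 (Fin N → ℂ)).symm (v j)‖ ^ 2 := dk_parseval _ _
        _ = 1 := by rw [hvj]; norm_num
    have hmain : δj ^ 2 * (1 - ‖c j‖ ^ 2) ≤ En ^ 2 := by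
      have h1 : ∑ k, ‖b'.repr y k‖ ^ 2 = ‖y‖ ^ 2 := dk_parseval b' y
      have h2 : ∀ k, k ≠ j → δj ^ 2 * ‖c k‖ ^ 2 ≤ ‖b'.repr y k‖ ^ 2 := by
        intro k hk
        rw [hrepr k, norm_mul, mul_pow]
        have hnc : ‖((lam' k : ℂ) - (lam j : ℂ))‖ = |lam' k - lam j| := by
          rw [← Complex.ofReal_sub, Complex.norm_real, Real.norm_eq_abs]
        rw [hnc]
        have hg := hgap k hk
        have h5 : δj ^ 2 ≤ |lam' k - lam j| ^ 2 := by nlinarith [abs_nonneg (lam' k - lam j)]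
        nlinarith [sq_nonneg ‖c k‖]
      have h3 : 1 - ‖c j‖ ^ 2 = ∑ k ∈ Finset.univ.erase j, ‖c k‖ ^ 2 := by
        rw [← hsumc,
          ← Finset.add_sum_erase Finset.univ (fun k => ‖c k‖ ^ 2) (Finset.mem_univ j)]
        ring
      calc δj ^ 2 * (1 - ‖c j‖ ^ 2) = ∑ k ∈ Finset.univ.erase j, δj ^ 2 * ‖c k‖ ^ 2 := by
            rw [h3, Finset.mul_sum]
        _ ≤ ∑ k ∈ Finset.univ.erase j, ‖b'.repr y k‖ ^ 2 :=
            Finset.sum_le_sum fun k hk => h2 k (Finset.ne_of_mem_erase hk)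
        _ ≤ ∑ k, ‖b'.repr y k‖ ^ 2 :=
            Finset.sum_le_sum_of_subset_of_nonneg (Finset.subset_univ _)
              (fun k _ _ => sq_nonneg _)
        _ = ‖y‖ ^ 2 := h1
        _ ≤ En ^ 2 := by nlinarith [norm_nonneg y]
    have hfin : Real.sqrt (1 - ‖c j‖ ^ 2) ≤ En / δj := by
      have hsq : 1 - ‖c j‖ ^ 2 ≤ (En / δj) ^ 2 := by
        rw [div_pow, le_div_iff₀ (by positivity)]
        nlinarith
      calc Real.sqrt (1 - ‖c j‖ ^ 2) ≤ Real.sqrt ((En / δj) ^ 2) := Real.sqrt_le_sqrt hsq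
        _ = En / δj := Real.sqrt_sq (by positivity)
    calc Real.sqrt (1 - ‖c j‖ ^ 2) ≤ En / δj := hfin
      _ ≤ Real.pi / 2 * En / δj := by
          refine (div_le_div_iff_of_pos_right hδpos).mpr ?_
          nlinarith
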